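/- Let (S₁,S₂,I₁,I₂,R₁,R₂,D₁,D₂) be a solution of the two-group active-population SIRD model on [0,∞) with initial data S₁(0) > 0, S₂(0) > 0, Iᵢ(0), Rᵢ(0) ≥ 0, all compartments remaining nonnegative and bounded, with Sᵢ(t) > 0 and Nᵢ(t) > 0 for all t ≥ 0, and suppose the limits Sᵢ^∞ = lim_{t→∞} Sᵢ(t) and Nᵢ^∞ = lim_{t→∞} Nᵢ(t) exist with Nᵢ^∞ > 0. Then for each i = 1,2: Sᵢ^∞ = Fᵢ(0) · (N₁^∞)^{βᵢ₁/μ₁} · (N₂^∞)^{βᵢ₂/μ₂} > 0, where Fᵢ(0) = Sᵢ(0) / (N₁(0)^{βᵢ₁/μ₁} · N₂(0)^{βᵢ₂/μ₂}). In particular the final susceptible populations are strictly positive. -/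

import Mathlib

open Filter Real

lemma sird_aux (b1 b2 m1 m2 : ℝ) (hm1 : 0 < m1) (hm2 : 0 < m2)
    (S I1 I2 N1 N2 : ℝ → ℝ)
    (hS' : ∀ t ≥ (0:ℝ), HasDerivAt S (-(b1 * I1 t / N1 t + b2 * I2 t / N2 t) * S t) t)
    (hN1' : ∀ t ≥ (0:ℝ), HasDerivAt N1 (-(m1 * I1 t)) t)
    (hN2' : ∀ t ≥ (0:ℝ), HasDerivAt N2 (-(m2 * I2 t)) t)
    (hSpos : ∀ t ≥ (0:ℝ), 0 < S t)
    (hN1pos : ∀ t ≥ (0:ℝ), 0 < N1 t)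
    (hN2pos : ∀ t ≥ (0:ℝ), 0 < N2 t)
    (Sinf N1inf N2inf : ℝ)
    (hSinf : Tendsto S atTop (nhds Sinf))
    (hN1inf : Tendsto N1 atTop (nhds N1inf))
    (hN2inf : Tendsto N2 atTop (nhds N2inf))
    (hN1infpos : 0 < N1inf) (hN2infpos : 0 < N2inf) :
    Sinf = S 0 / ((N1 0) ^ (b1/m1) * (N2 0) ^ (b2/m2)) * N1inf ^ (b1/m1) * N2inf ^ (b2/m2)
      ∧ 0 < Sinf := by
  set c1 := b1 / m1 with hc1
  set c2 := b2 / m2 with hc2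
  set G : ℝ → ℝ := fun t => Real.log (S t) - c1 * Real.log (N1 t) - c2 * Real.log (N2 t) with hG
  have hG' : ∀ t ≥ (0:ℝ), HasDerivAt G 0 t := by
    intro t ht
    have hlS := (hS' t ht).log (hSpos t ht).ne'
    have hl1 := (hN1' t ht).log (hN1pos t ht).ne'
    have hl2 := (hN2' t ht).log (hN2pos t ht).ne'
    have h := (hlS.sub (hl1.const_mul c1)).sub (hl2.const_mul c2)
    have e : -(b1 * I1 t / N1 t + b2 * I2 t / N2 t) * S t / S t
        - c1 * (-(m1 * I1 t) / N1 t) - c2 * (-(m2 * I2 t) / N2 t) = 0 := by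
      have hs := (hSpos t ht).ne'
      have h1 := (hN1pos t ht).ne'
      have h2 := (hN2pos t ht).ne'
      rw [hc1, hc2]
      field_simp
      ring
    rwa [e] at h
  have hGconst : ∀ t ≥ (0:ℝ), G t = G 0 := by
    intro t ht
    have := constant_of_has_deriv_right_zero (f := G) (a := 0) (b := t)
      (fun x hx => ((hG' x hx.1).continuousAt).continuousWithinAt)
      (fun x hx => (hG' x hx.1).hasDerivWithinAt)
    exact this t ⟨ht, le_rfl⟩
  have eexp : ∀ u, 0 ≤ u → Real.exp (G u) = S u / (N1 u ^ c1 * N2 u ^ c2) := by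
    intro u hu
    rw [hG]
    simp only
    rw [Real.exp_sub, Real.exp_sub, Real.exp_log (hSpos u hu),
      Real.rpow_def_of_pos (hN1pos u hu), Real.rpow_def_of_pos (hN2pos u hu),
      mul_comm c1, mul_comm c2, div_div]
  have key : ∀ t ≥ (0:ℝ), S t = S 0 / (N1 0 ^ c1 * N2 0 ^ c2) * N1 t ^ c1 * N2 t ^ c2 := by
    intro t ht
    have h := hGconst t ht
    have h2 : S t / (N1 t ^ c1 * N2 t ^ c2) = S 0 / (N1 0 ^ c1 * N2 0 ^ c2) := by
      rw [← eexp t ht, ← eexp 0 le_rfl, h]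
    have hn1 := (Real.rpow_pos_of_pos (hN1pos t ht) c1).ne'
    have hn2 := (Real.rpow_pos_of_pos (hN2pos t ht) c2).ne'
    rw [div_eq_div_iff (mul_pos (Real.rpow_pos_of_pos (hN1pos t ht) c1)
      (Real.rpow_pos_of_pos (hN2pos t ht) c2)).ne'
      (mul_pos (Real.rpow_pos_of_pos (hN1pos 0 le_rfl) c1)
      (Real.rpow_pos_of_pos (hN2pos 0 le_rfl) c2)).ne'] at h2
    rw [div_mul_eq_mul_div, div_mul_eq_mul_div, eq_div_iff
      (mul_pos (Real.rpow_pos_of_pos (hN1pos 0 le_rfl) c1)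
      (Real.rpow_pos_of_pos (hN2pos 0 le_rfl) c2)).ne']
    linear_combination h2
  have hlim : Tendsto (fun t => S 0 / (N1 0 ^ c1 * N2 0 ^ c2) * N1 t ^ c1 * N2 t ^ c2)
      atTop (nhds (S 0 / (N1 0 ^ c1 * N2 0 ^ c2) * N1inf ^ c1 * N2inf ^ c2)) :=
    ((hN1inf.rpow_const (Or.inl hN1infpos.ne')).const_mul _).mul
      (hN2inf.rpow_const (Or.inl hN2infpos.ne'))
  have heq : Sinf = S 0 / (N1 0 ^ c1 * N2 0 ^ c2) * N1inf ^ c1 * N2inf ^ c2 := by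
    refine tendsto_nhds_unique ?_ hlim
    refine hSinf.congr' ?_
    filter_upwards [eventually_ge_atTop (0:ℝ)] with t ht
    exact key t ht
  refine ⟨heq, ?_⟩
  rw [heq]
  exact mul_pos (mul_pos (div_pos (hSpos 0 le_rfl)
    (mul_pos (Real.rpow_pos_of_pos (hN1pos 0 le_rfl) _)
      (Real.rpow_pos_of_pos (hN2pos 0 le_rfl) _)))
    (Real.rpow_pos_of_pos hN1infpos _)) (Real.rpow_pos_of_pos hN2infpos _)

theorem stmt_6
    (β11 β12 β21 β22 γ1 γ2 μ1 μ2 : ℝ)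
    (hβ11 : 0 < β11) (hβ12 : 0 < β12) (hβ21 : 0 < β21) (hβ22 : 0 < β22)
    (hγ1 : 0 < γ1) (hγ2 : 0 < γ2) (hμ1 : 0 < μ1) (hμ2 : 0 < μ2)
    (S1 S2 I1 I2 R1 R2 D1 D2 N1 N2 : ℝ → ℝ)
    (hN1 : ∀ t, N1 t = S1 t + I1 t + R1 t)
    (hN2 : ∀ t, N2 t = S2 t + I2 t + R2 t)
    (hS1' : ∀ t ≥ (0:ℝ), HasDerivAt S1 (-(β11 * I1 t / N1 t + β12 * I2 t / N2 t) * S1 t) t)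
    (hS2' : ∀ t ≥ (0:ℝ), HasDerivAt S2 (-(β21 * I1 t / N1 t + β22 * I2 t / N2 t) * S2 t) t)
    (hI1' : ∀ t ≥ (0:ℝ), HasDerivAt I1 ((β11 * I1 t / N1 t + β12 * I2 t / N2 t) * S1 t - (γ1 + μ1) * I1 t) t)
    (hI2' : ∀ t ≥ (0:ℝ), HasDerivAt I2 ((β21 * I1 t / N1 t + β22 * I2 t / N2 t) * S2 t - (γ2 + μ2) * I2 t) t)
    (hR1' : ∀ t ≥ (0:ℝ), HasDerivAt R1 (γ1 * I1 t) t)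
    (hR2' : ∀ t ≥ (0:ℝ), HasDerivAt R2 (γ2 * I2 t) t)
    (hD1' : ∀ t ≥ (0:ℝ), HasDerivAt D1 (μ1 * I1 t) t)
    (hD2' : ∀ t ≥ (0:ℝ), HasDerivAt D2 (μ2 * I2 t) t)
    (hS10 : 0 < S1 0) (hS20 : 0 < S2 0)
    (hI10 : 0 ≤ I1 0) (hI20 : 0 ≤ I2 0)
    (hR10 : 0 ≤ R1 0) (hR20 : 0 ≤ R2 0)
    (hD10 : 0 ≤ D1 0) (hD20 : 0 ≤ D2 0)
    (hnn1 : ∀ t ≥ (0:ℝ), 0 ≤ S1 t ∧ 0 ≤ I1 t ∧ 0 ≤ R1 t ∧ 0 ≤ D1 t)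
    (hnn2 : ∀ t ≥ (0:ℝ), 0 ≤ S2 t ∧ 0 ≤ I2 t ∧ 0 ≤ R2 t ∧ 0 ≤ D2 t)
    (hbd : ∃ C : ℝ, ∀ t ≥ (0:ℝ), S1 t ≤ C ∧ I1 t ≤ C ∧ R1 t ≤ C ∧ D1 t ≤ C ∧
      S2 t ≤ C ∧ I2 t ≤ C ∧ R2 t ≤ C ∧ D2 t ≤ C)
    (hS1pos : ∀ t ≥ (0:ℝ), 0 < S1 t)
    (hS2pos : ∀ t ≥ (0:ℝ), 0 < S2 t)
    (hN1pos : ∀ t ≥ (0:ℝ), 0 < N1 t)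
    (hN2pos : ∀ t ≥ (0:ℝ), 0 < N2 t)
    (S1inf S2inf N1inf N2inf : ℝ)
    (hS1inf : Tendsto S1 atTop (nhds S1inf)) (hS2inf : Tendsto S2 atTop (nhds S2inf))
    (hN1inf : Tendsto N1 atTop (nhds N1inf)) (hN2inf : Tendsto N2 atTop (nhds N2inf))
    (hN1infpos : 0 < N1inf) (hN2infpos : 0 < N2inf) :
    (S1inf = S1 0 / ((N1 0) ^ (β11 / μ1) * (N2 0) ^ (β12 / μ2))
        * N1inf ^ (β11 / μ1) * N2inf ^ (β12 / μ2) ∧ 0 < S1inf) ∧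
    (S2inf = S2 0 / ((N1 0) ^ (β21 / μ1) * (N2 0) ^ (β22 / μ2))
        * N1inf ^ (β21 / μ1) * N2inf ^ (β22 / μ2) ∧ 0 < S2inf) := by
  have hN1d : ∀ t ≥ (0:ℝ), HasDerivAt N1 (-(μ1 * I1 t)) t := by
    intro t ht
    have h := ((hS1' t ht).add (hI1' t ht)).add (hR1' t ht)
    have hfun : (S1 + I1 + R1) = N1 := funext fun u => (hN1 u).symm
    rw [hfun] at h
    exact h.congr_deriv (by ring)
  have hN2d : ∀ t ≥ (0:ℝ), HasDerivAt N2 (-(μ2 * I2 t)) t := by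
    intro t ht
    have h := ((hS2' t ht).add (hI2' t ht)).add (hR2' t ht)
    have hfun : (S2 + I2 + R2) = N2 := funext fun u => (hN2 u).symm
    rw [hfun] at h
    exact h.congr_deriv (by ring)
  exact ⟨sird_aux β11 β12 μ1 μ2 hμ1 hμ2 S1 I1 I2 N1 N2 hS1' hN1d hN2d hS1pos hN1pos hN2pos
      S1inf N1inf N2inf hS1inf hN1inf hN2inf hN1infpos hN2infpos,
    sird_aux β21 β22 μ1 μ2 hμ1 hμ2 S2 I1 I2 N1 N2 hS2' hN1d hN2d hS2pos hN1pos hN2pos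
      S2inf N1inf N2inf hS2inf hN1inf hN2inf hN1infpos hN2infpos⟩
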